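/- Let n ≥ 2, 0 ≤ s ≤ n, and ε > 0. Then there exists δ_0 > 0, depending only on ε, n and s, such that the following holds for all 0 < δ < δ_0. Let P ⊆ B(0,1) ⊆ ℝ^n be a (δ^{-ε}, δ, s)-set. Then there exists a measurable set E ⊆ S^{n-1} with σ(E) ≤ δ^{ε} and the following property: if e ∈ S^{n-1} \ E and P' ⊆ P is any subset with |P'| ≥ δ^{-s+ε}, then N(π_e(P'), δ) ≥ δ^{-min{s,1} + 6ε}. -/

import Mathlib

open Metric MeasureTheory ENNReal
open scoped Pointwise

/-- The uniform (rotation-invariant) probability measure on the unit sphere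
`S^{n-1} ⊆ ℝ^n`, obtained by normalising the surface measure `volume.toSphere`. -/
noncomputable def sphereMeasure (n : ℕ) :
    Measure (sphere (0 : EuclideanSpace ℝ (Fin n)) 1) :=
  ((volume : Measure (EuclideanSpace ℝ (Fin n))).toSphere Set.univ)⁻¹ •
    (volume : Measure (EuclideanSpace ℝ (Fin n))).toSphere

/-- `coverNum A δ` is the least number of closed balls of radius `δ` needed to cover `A`
(as a value in `ℝ≥0∞`; it is `⊤` if no finite cover exists). -/
noncomputable def coverNum {X : Type*} [PseudoMetricSpace X] (A : Set X) (δ : ℝ) : ℝ≥0∞ :=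
  ⨅ (s : Finset X) (_ : A ⊆ ⋃ x ∈ s, closedBall x δ), (s.card : ℝ≥0∞)

/-- The `s`-dimensional Hausdorff content `H^s_∞`. -/
noncomputable def hausdorffContent {n : ℕ} (s : ℝ) (A : Set (EuclideanSpace ℝ (Fin n))) : ℝ≥0∞ :=
  ⨅ (U : ℕ → Set (EuclideanSpace ℝ (Fin n))) (_ : A ⊆ ⋃ i, U i), ∑' i, EMetric.diam (U i) ^ s

/-- A finite set `P ⊆ ℝ^n` is a `(C,δ,s)`-set if `|P ∩ B(x,r)| ≤ C (r/δ)^s` for all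
`x ∈ ℝ^n` and all `δ ≤ r ≤ 1`, where `B(x,r)` is the closed ball. -/
def IsDeltaSet {n : ℕ} (C δ s : ℝ) (P : Finset (EuclideanSpace ℝ (Fin n))) : Prop :=
  ∀ (x : EuclideanSpace ℝ (Fin n)) (r : ℝ), δ ≤ r → r ≤ 1 →
    (((P : Set (EuclideanSpace ℝ (Fin n))) ∩ closedBall x r).ncard : ℝ) ≤ C * (r / δ) ^ s

local notation "𝔼" n => EuclideanSpace ℝ (Fin n)

lemma slab_volume {n : ℕ} (hn : 1 ≤ n) (u : EuclideanSpace ℝ (Fin n)) (hu : ‖u‖ = 1)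
    (t : ℝ) (ht : 0 ≤ t) :
    volume {x : EuclideanSpace ℝ (Fin n) | ‖x‖ ≤ 1 ∧ |(inner ℝ u x : ℝ)| ≤ t} ≤
      ENNReal.ofReal (2 * t) * ENNReal.ofReal 2 ^ (n - 1) := by
  classical
  obtain ⟨m, rfl⟩ : ∃ m, n = m + 1 := ⟨n - 1, (Nat.succ_pred_eq_of_pos hn).symm⟩
  -- orthonormal basis with b 0 = u
  have hcard : Module.finrank ℝ (EuclideanSpace ℝ (Fin (m+1))) = Fintype.card (Fin (m+1)) := by
    simp [finrank_euclideanSpace]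
  have horth : Orthonormal ℝ (({0} : Set (Fin (m+1))).restrict (fun _ => u)) := by
    rw [orthonormal_iff_ite]
    rintro ⟨i, hi⟩ ⟨j, hj⟩
    simp only [Set.mem_singleton_iff] at hi hj
    have : (⟨i, hi⟩ : ({0} : Set (Fin (m+1)))) = ⟨j, hj⟩ := by
      apply Subtype.ext; simp [hi, hj]
    rw [this, if_pos rfl]
    have h1 : (inner ℝ u u : ℝ) = 1 := by
      rw [real_inner_self_eq_norm_sq, hu]; norm_num
    simpa [Set.restrict] using h1
  obtain ⟨b, hb⟩ := horth.exists_orthonormalBasis_extension_of_card_eq hcard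
  have hb0 : b 0 = u := hb 0 rfl
  set T : Set (EuclideanSpace ℝ (Fin (m+1))) :=
    (MeasurableEquiv.toLp 2 (Fin (m+1) → ℝ)).symm ⁻¹' Set.pi Set.univ (fun i => Set.Icc (-(if i = 0 then t else 1)) (if i = 0 then t else 1)) with hT
  have hsub : {x : EuclideanSpace ℝ (Fin (m+1)) | ‖x‖ ≤ 1 ∧ |(inner ℝ u x : ℝ)| ≤ t} ⊆
      b.repr ⁻¹' T := by
    rintro x ⟨hx1, hx2⟩
    intro i _
    change b.repr x i ∈ _
    have hrepr : b.repr x i = (inner ℝ (b i) x : ℝ) := b.repr_apply_apply x i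
    rw [Set.mem_Icc, ← abs_le]
    by_cases hi : i = 0
    · simp only [hi, if_pos rfl]
      rw [← hi, hrepr]; simpa [hi, hb0] using hx2
    · simp only [if_neg hi]
      rw [hrepr]
      calc |(inner ℝ (b i) x : ℝ)| ≤ ‖b i‖ * ‖x‖ := abs_real_inner_le_norm _ _
        _ ≤ 1 * 1 := by
            apply mul_le_mul _ hx1 (norm_nonneg _) zero_le_one
            simp [b.orthonormal.1 i]
        _ = 1 := mul_one 1
  calc volume {x : EuclideanSpace ℝ (Fin (m+1)) | ‖x‖ ≤ 1 ∧ |(inner ℝ u x : ℝ)| ≤ t}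
      ≤ volume (b.repr ⁻¹' T) := measure_mono hsub
    _ = volume T := by
        refine (b.measurePreserving_repr).measure_preimage ?_
        refine ((MeasurableEquiv.toLp 2 (Fin (m+1) → ℝ)).symm.measurable
            (MeasurableSet.univ_pi (fun i => measurableSet_Icc))).nullMeasurableSet
    _ = ENNReal.ofReal (2 * t) * ENNReal.ofReal 2 ^ m := by
        have : T = (MeasurableEquiv.toLp 2 (Fin (m+1) → ℝ)).symm ⁻¹'
            (Set.pi Set.univ (fun i => Set.Icc (-(if i = 0 then t else 1))
              (if i = 0 then t else 1))) := by
          rfl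
        rw [this, (EuclideanSpace.volume_preserving_symm_measurableEquiv_toLp (Fin (m+1))).measure_preimage
          (MeasurableSet.univ_pi (fun i => measurableSet_Icc)).nullMeasurableSet]
        rw [volume_pi_pi]
        simp only [Real.volume_Icc]
        rw [Fin.prod_univ_succ]
        have h0 : (if (0 : Fin (m+1)) = 0 then t else 1) = t := if_pos rfl
        have hsucc : ∀ i : Fin m, (if (i.succ : Fin (m+1)) = 0 then t else 1) = 1 :=
          fun i => if_neg (Fin.succ_ne_zero i)
        rw [h0]
        congr 1
        · congr 1; ring
        · calc (∏ i : Fin m, ENNReal.ofReal ((if (i.succ : Fin (m+1)) = 0 then t else 1) -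
                -(if (i.succ : Fin (m+1)) = 0 then t else 1)))
              = ∏ _i : Fin m, ENNReal.ofReal 2 :=
                Finset.prod_congr rfl (fun i _ => by rw [hsucc i]; norm_num)
            _ = ENNReal.ofReal 2 ^ m := by
                rw [Finset.prod_const, Finset.card_univ, Fintype.card_fin]

noncomputable def sphC (n : ℕ) : ℝ :=
  ((n : ℝ) * 2 ^ n) /
    ((volume : Measure (EuclideanSpace ℝ (Fin n))).toSphere Set.univ).toReal

section Band
variable {n : ℕ}

lemma toSphere_univ_ne_zero (hn : 1 ≤ n) :
    ((volume : Measure (EuclideanSpace ℝ (Fin n))).toSphere Set.univ) ≠ 0 := by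
  rw [Measure.toSphere_apply_univ]
  refine mul_ne_zero ?_ (measure_ball_pos _ _ one_pos).ne'
  simp only [ne_eq, Nat.cast_eq_zero]
  rw [finrank_euclideanSpace, Fintype.card_fin]
  omega

lemma toSphere_univ_ne_top :
    ((volume : Measure (EuclideanSpace ℝ (Fin n))).toSphere Set.univ) ≠ ⊤ :=
  measure_ne_top _ _

lemma sphereMeasure_le_one (hn : 1 ≤ n) (A : Set (sphere (0 : EuclideanSpace ℝ (Fin n)) 1)) :
    sphereMeasure n A ≤ 1 := by
  rw [sphereMeasure, Measure.smul_apply, smul_eq_mul]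
  calc _ ≤ ((volume : Measure (EuclideanSpace ℝ (Fin n))).toSphere Set.univ)⁻¹ *
      ((volume : Measure (EuclideanSpace ℝ (Fin n))).toSphere Set.univ) := by
        gcongr
        exact Set.subset_univ _
    _ = 1 := ENNReal.inv_mul_cancel (toSphere_univ_ne_zero hn) toSphere_univ_ne_top

lemma measurableSet_band (v : EuclideanSpace ℝ (Fin n)) (t : ℝ) :
    MeasurableSet {e : sphere (0 : EuclideanSpace ℝ (Fin n)) 1 |
      |(inner ℝ v (e : EuclideanSpace ℝ (Fin n)) : ℝ)| ≤ t} := by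
  refine (isClosed_le ?_ continuous_const).measurableSet
  exact (Continuous.inner continuous_const continuous_subtype_val).abs

lemma sphereMeasure_band_le (hn : 1 ≤ n) (v : EuclideanSpace ℝ (Fin n)) (hv : v ≠ 0)
    (t : ℝ) (ht : 0 ≤ t) :
    sphereMeasure n {e : sphere (0 : EuclideanSpace ℝ (Fin n)) 1 |
        |(inner ℝ v (e : EuclideanSpace ℝ (Fin n)) : ℝ)| ≤ t} ≤
      ENNReal.ofReal (sphC n * (t / ‖v‖)) := by
  classical
  set c := ((volume : Measure (EuclideanSpace ℝ (Fin n))).toSphere Set.univ) with hc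
  have hc0 : c ≠ 0 := toSphere_univ_ne_zero hn
  have hctop : c ≠ ⊤ := toSphere_univ_ne_top
  have hvpos : (0 : ℝ) < ‖v‖ := norm_pos_iff.mpr hv
  set u : EuclideanSpace ℝ (Fin n) := ‖v‖⁻¹ • v with hu_def
  have hu : ‖u‖ = 1 := norm_smul_inv_norm hv
  have hiff : ∀ x : EuclideanSpace ℝ (Fin n),
      (inner ℝ u x : ℝ) = ‖v‖⁻¹ * (inner ℝ v x : ℝ) := fun x => real_inner_smul_left v x _
  set A := {e : sphere (0 : EuclideanSpace ℝ (Fin n)) 1 |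
    |(inner ℝ v (e : EuclideanSpace ℝ (Fin n)) : ℝ)| ≤ t} with hA_def
  have hA : MeasurableSet A := measurableSet_band v t
  have htv : 0 ≤ t / ‖v‖ := div_nonneg ht hvpos.le
  have hsub : Set.Ioo (0:ℝ) 1 • ((↑) '' A : Set (EuclideanSpace ℝ (Fin n))) ⊆
      {x : EuclideanSpace ℝ (Fin n) | ‖x‖ ≤ 1 ∧ |(inner ℝ u x : ℝ)| ≤ t / ‖v‖} := by
    rintro x hx
    rw [Set.mem_smul] at hx
    obtain ⟨r, hr, y, hy, rfl⟩ := hx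
    obtain ⟨e, heA, rfl⟩ := hy
    obtain ⟨hr0, hr1⟩ := hr
    constructor
    · rw [norm_smul]
      have : ‖(e : EuclideanSpace ℝ (Fin n))‖ = 1 := by
        simpa using mem_sphere_zero_iff_norm.mp e.2
      rw [this, mul_one, Real.norm_eq_abs, abs_of_pos hr0]
      exact hr1.le
    · have heu : |(inner ℝ u (e : EuclideanSpace ℝ (Fin n)) : ℝ)| ≤ t / ‖v‖ := by
        rw [hiff, abs_mul, abs_inv, abs_of_pos hvpos]
        rw [div_eq_inv_mul]
        exact mul_le_mul_of_nonneg_left heA (inv_nonneg.mpr hvpos.le)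
      rw [real_inner_smul_right, abs_mul, abs_of_pos hr0]
      calc r * |(inner ℝ u (e : EuclideanSpace ℝ (Fin n)) : ℝ)| ≤
          1 * |(inner ℝ u (e : EuclideanSpace ℝ (Fin n)) : ℝ)| := by
            exact mul_le_mul_of_nonneg_right hr1.le (abs_nonneg _)
        _ ≤ t / ‖v‖ := by rw [one_mul]; exact heu
  have hvol : volume (Set.Ioo (0:ℝ) 1 • ((↑) '' A : Set (EuclideanSpace ℝ (Fin n)))) ≤
      ENNReal.ofReal (2 * (t / ‖v‖)) * ENNReal.ofReal 2 ^ (n - 1) :=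
    le_trans (measure_mono hsub) (slab_volume hn u hu _ htv)
  have hdim : (Module.finrank ℝ (EuclideanSpace ℝ (Fin n)) : ℝ≥0∞) = (n : ℝ≥0∞) := by
    rw [finrank_euclideanSpace, Fintype.card_fin]
  have hstep : sphereMeasure n A ≤ c⁻¹ * ((n : ℝ≥0∞) *
      (ENNReal.ofReal (2 * (t / ‖v‖)) * ENNReal.ofReal 2 ^ (n - 1))) := by
    rw [sphereMeasure, Measure.smul_apply, smul_eq_mul, ← hc]
    gcongr
    rw [Measure.toSphere_apply' _ hA, hdim]
    gcongr
  refine hstep.trans ?_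
  have hM : ((n : ℝ≥0∞) * (ENNReal.ofReal (2 * (t / ‖v‖)) * ENNReal.ofReal 2 ^ (n - 1))) =
      ENNReal.ofReal ((n : ℝ) * 2 ^ n * (t / ‖v‖)) := by
    rw [← ENNReal.ofReal_pow (by norm_num : (0:ℝ) ≤ 2), ← ENNReal.ofReal_natCast n,
      ← ENNReal.ofReal_mul (by positivity), ← ENNReal.ofReal_mul (by positivity)]
    congr 1
    have h2 : (2:ℝ) * 2 ^ (n-1) = 2 ^ n := by
      rw [← pow_succ']
      congr 1
      omega
    calc (n:ℝ) * (2 * (t / ‖v‖) * 2 ^ (n-1))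
        = (n:ℝ) * (2 * 2 ^ (n-1)) * (t / ‖v‖) := by ring
      _ = (n:ℝ) * 2 ^ n * (t / ‖v‖) := by rw [h2]
  rw [hM]
  have hcrt : 0 < c.toReal := ENNReal.toReal_pos hc0 hctop
  have hcinv : c⁻¹ = ENNReal.ofReal (c.toReal)⁻¹ := by
    rw [ENNReal.ofReal_inv_of_pos hcrt, ENNReal.ofReal_toReal hctop]
  rw [hcinv, ← ENNReal.ofReal_mul (by positivity)]
  apply ENNReal.ofReal_le_ofReal
  rw [sphC]
  rw [div_mul_eq_mul_div, div_eq_inv_mul]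
  ring_nf
  exact le_of_eq (by rw [← hc]; ring)

end Band

lemma exists_dyadic : ∀ (J : ℕ) (d : ℝ), (1/2:ℝ)^J < d → d ≤ 2 →
    ∃ j ≤ J, (1/2:ℝ)^j < d ∧ d ≤ 2*(1/2:ℝ)^j := by
  intro J
  induction J with
  | zero => intro d h1 h2; exact ⟨0, le_refl 0, by simpa using h1, by simpa using h2⟩
  | succ J ih =>
    intro d h1 h2
    by_cases h : (1/2:ℝ)^J < d
    · obtain ⟨j, hj, h3, h4⟩ := ih d h h2
      exact ⟨j, hj.trans (Nat.le_succ J), h3, h4⟩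
    · push_neg at h
      refine ⟨J+1, le_refl _, h1, ?_⟩
      calc d ≤ (1/2:ℝ)^J := h
        _ = 2*(1/2:ℝ)^(J+1) := by ring

section Counting
variable {n : ℕ} {P : Finset (EuclideanSpace ℝ (Fin n))} {δ s ε : ℝ}

lemma card_filter_eq_ncard (p : EuclideanSpace ℝ (Fin n)) (r : ℝ) :
    (((P : Set (EuclideanSpace ℝ (Fin n))) ∩ closedBall p r).ncard : ℝ) =
      ((P.filter (fun q => dist q p ≤ r)).card : ℝ) := by
  classical
  congr 1
  rw [← Set.ncard_coe_finset (P.filter (fun q => dist q p ≤ r))]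
  congr 1
  ext q
  simp [Set.mem_inter_iff, mem_closedBall]

lemma count_le (hδ0 : 0 < δ) (hδ1 : δ ≤ 1) (hs0 : 0 ≤ s)
    (hP1 : (P : Set (EuclideanSpace ℝ (Fin n))) ⊆ closedBall 0 1)
    (hP : IsDeltaSet (δ ^ (-ε)) δ s P) (p : EuclideanSpace ℝ (Fin n)) {r : ℝ} (hr : δ ≤ r) :
    ((P.filter (fun q => dist q p ≤ r)).card : ℝ) ≤ δ ^ (-ε-s) * r ^ s := by
  classical
  have hr0 : 0 < r := hδ0.trans_le hr
  have hds : δ ^ (-ε-s) = δ ^ (-ε) * δ ^ (-s) := by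
    rw [← Real.rpow_add hδ0]; ring_nf
  by_cases h1 : r ≤ 1
  · have := hP p r hr h1
    rw [card_filter_eq_ncard p r] at this
    calc ((P.filter (fun q => dist q p ≤ r)).card : ℝ) ≤ δ ^ (-ε) * (r/δ) ^ s := this
      _ = δ ^ (-ε-s) * r ^ s := by
          rw [Real.div_rpow hr0.le hδ0.le, hds, Real.rpow_neg hδ0.le s]
          field_simp
  · push_neg at h1
    have hcardP : ((P.card : ℝ)) ≤ δ ^ (-ε-s) := by
      have := hP 0 1 hδ1 le_rfl
      rw [card_filter_eq_ncard 0 1] at this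
      have hfil : P.filter (fun q => dist q 0 ≤ 1) = P := by
        apply Finset.filter_true_of_mem
        intro q hq
        simpa [mem_closedBall] using hP1 hq
      rw [hfil] at this
      calc ((P.card : ℝ)) ≤ δ ^ (-ε) * (1/δ) ^ s := this
        _ = δ ^ (-ε-s) := by
            rw [one_div, Real.inv_rpow hδ0.le, ← Real.rpow_neg hδ0.le s, ← Real.rpow_add hδ0]
            ring_nf
    have h2 : (1:ℝ) ≤ r ^ s := by
      calc (1:ℝ) = 1 ^ s := (Real.one_rpow s).symm
        _ ≤ r ^ s := Real.rpow_le_rpow zero_le_one h1.le hs0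
    calc ((P.filter (fun q => dist q p ≤ r)).card : ℝ) ≤ (P.card : ℝ) := by
          exact_mod_cast Finset.card_le_card (Finset.filter_subset _ _)
      _ ≤ δ ^ (-ε-s) := hcardP
      _ ≤ δ ^ (-ε-s) * r ^ s := le_mul_of_one_le_right (Real.rpow_nonneg hδ0.le _) h2

end Counting

lemma pairsum_le {n : ℕ} {P : Finset (EuclideanSpace ℝ (Fin n))} {δ s ε K0 : ℝ} {J : ℕ}
    (hδ0 : 0 < δ) (hδ1 : δ ≤ 1) (hs0 : 0 ≤ s) (hsn : s ≤ n)
    (hP1 : (P : Set (EuclideanSpace ℝ (Fin n))) ⊆ closedBall 0 1)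
    (hP : IsDeltaSet (δ ^ (-ε)) δ s P)
    (hK0 : 1 ≤ K0) (hJ1 : (1/2:ℝ)^J ≤ δ) (hJ2 : δ ≤ 2*(1/2:ℝ)^J)
    {p : EuclideanSpace ℝ (Fin n)} (hp : p ∈ P) :
    ∑ q ∈ P, (if dist q p ≤ (1/2:ℝ)^J then (1:ℝ) else K0*δ/dist q p) ≤
      (1 + (J+1)*(2^(n+1)*K0)) * δ ^ (min s 1 - s - ε) := by
  classical
  have hK0' : (0:ℝ) < K0 := lt_of_lt_of_le one_pos hK0
  have hmin : min s 1 - s ≤ 0 := by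
    have := min_le_left s 1; linarith
  have hdmin : (1:ℝ) ≤ δ ^ (min s 1 - s) :=
    Real.one_le_rpow_of_pos_of_le_one_of_nonpos hδ0 hδ1 hmin
  have hsplit : δ ^ (min s 1 - s - ε) = δ ^ (min s 1 - s) * δ ^ (-ε) := by
    rw [← Real.rpow_add hδ0]; ring_nf
  -- pointwise dyadic bound
  have hpt : ∀ q ∈ P, (if dist q p ≤ (1/2:ℝ)^J then (1:ℝ) else K0*δ/dist q p) ≤
      (if dist q p ≤ (1/2:ℝ)^J then (1:ℝ) else 0) +
      ∑ j ∈ Finset.range (J+1), (if ((1/2:ℝ)^j < dist q p ∧ dist q p ≤ 2*(1/2:ℝ)^j)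
        then K0*δ*2^j else 0) := by
    intro q hq
    by_cases hcase : dist q p ≤ (1/2:ℝ)^J
    · rw [if_pos hcase, if_pos hcase]
      have h0 : (0:ℝ) ≤ ∑ j ∈ Finset.range (J+1),
          (if ((1/2:ℝ)^j < dist q p ∧ dist q p ≤ 2*(1/2:ℝ)^j) then K0*δ*2^j else 0) := by
        apply Finset.sum_nonneg
        intro j _
        split_ifs <;> positivity
      linarith
    · rw [if_neg hcase, if_neg hcase]
      push_neg at hcase
      have hd2 : dist q p ≤ 2 := by
        have h1 : dist q 0 ≤ 1 := by simpa [mem_closedBall] using hP1 hq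
        have h2 : dist p 0 ≤ 1 := by simpa [mem_closedBall] using hP1 hp
        calc dist q p ≤ dist q 0 + dist 0 p := dist_triangle q 0 p
          _ ≤ 1 + 1 := by rw [dist_comm 0 p]; linarith
          _ = 2 := by norm_num
      obtain ⟨j, hjJ, hj1, hj2⟩ := exists_dyadic J (dist q p) hcase hd2
      have hdpos : (0:ℝ) < dist q p := lt_trans (by positivity) hj1
      have hterm : K0*δ/dist q p ≤ K0*δ*2^j := by
        rw [div_le_iff₀ hdpos]
        have h2j : ((1:ℝ)/2)^j * 2^j = 1 := by
          rw [← mul_pow]; norm_num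
        calc K0*δ = (K0*δ*2^j) * ((1/2:ℝ)^j) := by
              linear_combination (-(K0*δ))*h2j
          _ ≤ (K0*δ*2^j) * dist q p :=
              mul_le_mul_of_nonneg_left hj1.le (by positivity)
      refine le_trans hterm ?_
      have hsingle : K0*δ*2^j ≤ ∑ j ∈ Finset.range (J+1),
          (if ((1/2:ℝ)^j < dist q p ∧ dist q p ≤ 2*(1/2:ℝ)^j) then K0*δ*2^j else 0) := by
        have hmem : j ∈ Finset.range (J+1) := Finset.mem_range.mpr (by omega)
        have hstart : K0*δ*(2:ℝ)^j = (if ((1/2:ℝ)^j < dist q p ∧ dist q p ≤ 2*(1/2:ℝ)^j)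
            then K0*δ*(2:ℝ)^j else 0) := (if_pos ⟨hj1, hj2⟩).symm
        refine le_trans (le_of_eq hstart) (Finset.single_le_sum
          (f := fun i => if (1/2:ℝ)^i < dist q p ∧ dist q p ≤ 2*(1/2:ℝ)^i
            then K0*δ*(2:ℝ)^i else 0) ?_ hmem)
        intro i _
        split_ifs <;> positivity
      linarith
  have hsum := Finset.sum_le_sum hpt
  rw [Finset.sum_add_distrib] at hsum
  -- core bound
  have hcore : ∑ q ∈ P, (if dist q p ≤ (1/2:ℝ)^J then (1:ℝ) else 0) ≤ δ ^ (-ε) := by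
    rw [Finset.sum_boole]
    have hsub : P.filter (fun q => dist q p ≤ (1/2:ℝ)^J) ⊆
        P.filter (fun q => dist q p ≤ δ) :=
      Finset.monotone_filter_right P (fun q _ hq => le_trans hq hJ1)
    have hcount := hP p δ le_rfl hδ1
    rw [card_filter_eq_ncard p δ] at hcount
    have heq : (δ/δ) ^ s = (1:ℝ) := by
      rw [div_self hδ0.ne', Real.one_rpow]
    calc ((P.filter (fun q => dist q p ≤ (1/2:ℝ)^J)).card : ℝ) ≤
        ((P.filter (fun q => dist q p ≤ δ)).card : ℝ) := by
          exact_mod_cast Finset.card_le_card hsub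
      _ ≤ δ ^ (-ε) * (δ/δ) ^ s := hcount
      _ = δ ^ (-ε) := by rw [heq, mul_one]
  -- shell bound
  have hshell : ∑ q ∈ P, ∑ j ∈ Finset.range (J+1),
      (if ((1/2:ℝ)^j < dist q p ∧ dist q p ≤ 2*(1/2:ℝ)^j) then K0*δ*2^j else 0) ≤
      ((J:ℝ)+1) * (2^(n+1)*K0) * δ ^ (min s 1 - s - ε) := by
    rw [Finset.sum_comm]
    have hjbound : ∀ j ∈ Finset.range (J+1), ∑ q ∈ P,
        (if ((1/2:ℝ)^j < dist q p ∧ dist q p ≤ 2*(1/2:ℝ)^j) then K0*δ*2^j else 0) ≤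
        2^(n+1)*K0 * δ ^ (min s 1 - s - ε) := by
      intro j hj
      rw [Finset.mem_range] at hj
      set R : ℝ := 2*(1/2:ℝ)^j with hR_def
      have hRpos : 0 < R := by positivity
      have hR2 : R ≤ 2 := by
        have : ((1:ℝ)/2)^j ≤ 1 := pow_le_one₀ (by norm_num) (by norm_num)
        rw [hR_def]; linarith
      have hRδ : δ ≤ R := by
        have : ((1:ℝ)/2)^J ≤ (1/2:ℝ)^j := pow_le_pow_of_le_one (by norm_num) (by norm_num)
          (by omega)
        rw [hR_def]; linarith
      have hstep1 : ∑ q ∈ P, (if ((1/2:ℝ)^j < dist q p ∧ dist q p ≤ 2*(1/2:ℝ)^j)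
          then K0*δ*2^j else 0) ≤ ∑ q ∈ P, (if dist q p ≤ R then K0*δ*2^j else 0) := by
        apply Finset.sum_le_sum
        intro q _
        by_cases hq : (1/2:ℝ)^j < dist q p ∧ dist q p ≤ 2*(1/2:ℝ)^j
        · rw [if_pos hq, if_pos hq.2]
        · rw [if_neg hq]
          split_ifs <;> positivity
      have hstep2 : ∑ q ∈ P, (if dist q p ≤ R then K0*δ*(2:ℝ)^j else 0) =
          K0*δ*2^j * ((P.filter (fun q => dist q p ≤ R)).card : ℝ) := by
        rw [← Finset.sum_filter, Finset.sum_const, nsmul_eq_mul, mul_comm]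
      have hcnt := count_le hδ0 hδ1 hs0 hP1 hP p hRδ
      have hpowj : (2:ℝ)^j * (1/2:ℝ)^j = 1 := by rw [← mul_pow]; norm_num
      have h2j : (2:ℝ)^j = 2/R := by
        rw [hR_def, eq_div_iff (by positivity : (2:ℝ)*(1/2:ℝ)^j ≠ 0)]
        linear_combination 2 * hpowj
      have hRs : R ^ (s-1) ≤ 2^((n:ℝ)) * δ ^ (min s 1 - 1) := by
        rcases le_or_gt 1 s with hs1 | hs1
        · rw [min_eq_right hs1]
          simp only [sub_self, Real.rpow_zero, mul_one]
          calc R ^ (s-1) ≤ 2 ^ (s-1) := Real.rpow_le_rpow hRpos.le hR2 (by linarith)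
            _ ≤ 2 ^ ((n:ℝ)) := Real.rpow_le_rpow_of_exponent_le one_le_two (by linarith)
        · rw [min_eq_left hs1.le]
          have h1 : R ^ (s-1) ≤ δ ^ (s-1) :=
            Real.rpow_le_rpow_of_nonpos hδ0 hRδ (by linarith)
          have h2 : (1:ℝ) ≤ 2 ^ ((n:ℝ)) :=
            Real.one_le_rpow one_le_two (by positivity)
          calc R ^ (s-1) ≤ δ ^ (s-1) := h1
            _ ≤ 2 ^ ((n:ℝ)) * δ ^ (s-1) := le_mul_of_one_le_left (by positivity) h2
      calc ∑ q ∈ P, (if ((1/2:ℝ)^j < dist q p ∧ dist q p ≤ 2*(1/2:ℝ)^j)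
            then K0*δ*2^j else 0)
          ≤ K0*δ*2^j * ((P.filter (fun q => dist q p ≤ R)).card : ℝ) := by
            rw [← hstep2]; exact hstep1
        _ ≤ K0*δ*2^j * (δ ^ (-ε-s) * R^s) := by
            apply mul_le_mul_of_nonneg_left hcnt (by positivity)
        _ = 2*K0 * (δ * δ ^ (-ε-s)) * R^(s-1) := by
            rw [h2j, Real.rpow_sub_one hRpos.ne']
            field_simp
        _ ≤ 2*K0 * (δ * δ ^ (-ε-s)) * (2^((n:ℝ)) * δ ^ (min s 1 - 1)) := by
            apply mul_le_mul_of_nonneg_left hRs (by positivity)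
        _ = 2*(2:ℝ)^(n:ℕ)*K0 * (δ * (δ ^ (-ε-s) * δ ^ (min s 1 - 1))) := by
            rw [Real.rpow_natCast]
            ring
        _ = 2^(n+1)*K0 * δ ^ (min s 1 - s - ε) := by
            have e1 : δ * (δ ^ (-ε-s) * δ ^ (min s 1 - 1)) = δ ^ (min s 1 - s - ε) := by
              rw [← Real.rpow_add hδ0]
              nth_rewrite 1 [← Real.rpow_one δ]
              rw [← Real.rpow_add hδ0]
              congr 1
              ring
            rw [e1, pow_succ]
            ring
    calc ∑ j ∈ Finset.range (J+1), ∑ q ∈ P,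
        (if ((1/2:ℝ)^j < dist q p ∧ dist q p ≤ 2*(1/2:ℝ)^j) then K0*δ*2^j else 0)
        ≤ ∑ _j ∈ Finset.range (J+1), 2^(n+1)*K0 * δ ^ (min s 1 - s - ε) :=
          Finset.sum_le_sum hjbound
      _ = ((J:ℝ)+1) * (2^(n+1)*K0) * δ ^ (min s 1 - s - ε) := by
          rw [Finset.sum_const, Finset.card_range, nsmul_eq_mul]
          push_cast
          ring
  have hcore' : ∑ q ∈ P, (if dist q p ≤ (1/2:ℝ)^J then (1:ℝ) else 0) ≤
      δ ^ (min s 1 - s - ε) := by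
    calc ∑ q ∈ P, (if dist q p ≤ (1/2:ℝ)^J then (1:ℝ) else 0) ≤ δ ^ (-ε) := hcore
      _ ≤ δ ^ (min s 1 - s) * δ ^ (-ε) :=
          le_mul_of_one_le_left (Real.rpow_nonneg hδ0.le _) hdmin
      _ = δ ^ (min s 1 - s - ε) := hsplit.symm
  calc ∑ q ∈ P, (if dist q p ≤ (1/2:ℝ)^J then (1:ℝ) else K0*δ/dist q p) ≤ _ := hsum
    _ ≤ δ ^ (min s 1 - s - ε) + ((J:ℝ)+1) * (2^(n+1)*K0) * δ ^ (min s 1 - s - ε) := by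
        exact add_le_add hcore' hshell
    _ = (1 + ((J:ℝ)+1)*(2^(n+1)*K0)) * δ ^ (min s 1 - s - ε) := by ring


set_option maxHeartbeats 2000000 in
/-- Discretised Marstrand projection estimate: for a `(δ^{-ε},δ,s)`-set `P ⊆ B(0,1)`,
outside an exceptional set of directions of σ-measure at most `δ^ε`, every subset
`P' ⊆ P` with `|P'| ≥ δ^{-s+ε}` has `N(π_e(P'),δ) ≥ δ^{-min{s,1}+6ε}`. -/
theorem statement3 (n : ℕ) (hn : 2 ≤ n) (s ε : ℝ) (hs0 : 0 ≤ s) (hsn : s ≤ n) (hε : 0 < ε) :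
    ∃ δ0 > (0 : ℝ), ∀ δ : ℝ, 0 < δ → δ < δ0 →
      ∀ P : Finset (EuclideanSpace ℝ (Fin n)),
        (P : Set (EuclideanSpace ℝ (Fin n))) ⊆ closedBall 0 1 →
        IsDeltaSet (δ ^ (-ε)) δ s P →
        ∃ E : Set (sphere (0 : EuclideanSpace ℝ (Fin n)) 1), MeasurableSet E ∧
          sphereMeasure n E ≤ ENNReal.ofReal (δ ^ ε) ∧
          ∀ e : sphere (0 : EuclideanSpace ℝ (Fin n)) 1, e ∉ E →
            ∀ P' ⊆ P, δ ^ (-s + ε) ≤ (P'.card : ℝ) →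
              ENNReal.ofReal (δ ^ (-(min s 1) + 6 * ε)) ≤
                coverNum ((fun x => (inner ℝ x (e : EuclideanSpace ℝ (Fin n)) : ℝ)) ''
                  (P' : Set (EuclideanSpace ℝ (Fin n)))) δ := by
  classical
  have hn1 : 1 ≤ n := by omega
  set K0 : ℝ := max (4 * sphC n) 1 with hK0_def
  have hK0 : 1 ≤ K0 := le_max_right _ _
  have hK0pos : 0 < K0 := lt_of_lt_of_le one_pos hK0
  set K1 : ℝ := 2^(n+1) * K0 with hK1_def
  have h2n1 : (1:ℝ) ≤ 2^(n+1) := one_le_pow₀ one_le_two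
  have hK1 : 1 ≤ K1 := by
    calc (1:ℝ) = 1 * 1 := (one_mul 1).symm
      _ ≤ 2^(n+1) * K0 := mul_le_mul h2n1 hK0 zero_le_one (by positivity)
  have hK1pos : 0 < K1 := lt_of_lt_of_le one_pos hK1
  have hK04 : 4 * sphC n ≤ K0 := le_max_left _ _
  set K3 : ℝ := 4*K1 + 4*K1/ε with hK3_def
  have hK3pos : 0 < K3 := by positivity
  refine ⟨min (1/2) (K3⁻¹ ^ (2/ε)), lt_min (by norm_num)
    (Real.rpow_pos_of_pos (by positivity) _), ?_⟩
  intro δ hδ0 hδlt P hP1 hP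
  have hδhalf : δ < 1/2 := lt_of_lt_of_le hδlt (min_le_left _ _)
  have hδ1 : δ ≤ 1 := by linarith
  have hδK3 : δ < K3⁻¹ ^ (2/ε) := lt_of_lt_of_le hδlt (min_le_right _ _)
  have h1δ : (1:ℝ) ≤ 1/δ := one_le_one_div hδ0 hδ1
  -- the dyadic scale J
  set L : ℝ := Real.logb 2 (1/δ) with hL_def
  have hL0 : 0 ≤ L := Real.logb_nonneg one_lt_two h1δ
  set J : ℕ := ⌈L⌉₊ with hJ_def
  have hJL : L ≤ (J:ℝ) := Nat.le_ceil L
  have hJL2 : (J:ℝ) < L + 1 := Nat.ceil_lt_add_one hL0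
  have h2L : (2:ℝ) ^ L = 1/δ := Real.rpow_logb two_pos (by norm_num) (by positivity)
  have h2Jpos : (0:ℝ) < 2^J := by positivity
  clear_value K0 K1 K3 L J
  have hJ1 : (1/2:ℝ)^J ≤ δ := by
    have h1 : (1:ℝ)/δ ≤ 2^(J:ℝ) := by
      rw [← h2L]; exact Real.rpow_le_rpow_of_exponent_le one_le_two hJL
    rw [Real.rpow_natCast] at h1
    rw [one_div, inv_pow, inv_le_comm₀ h2Jpos hδ0]
    rwa [one_div] at h1
  have hJ2 : δ ≤ 2*(1/2:ℝ)^J := by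
    have h1 : (2:ℝ)^(J:ℝ) ≤ 2^(L+1) :=
      Real.rpow_le_rpow_of_exponent_le one_le_two hJL2.le
    rw [Real.rpow_add two_pos, h2L, Real.rpow_one, Real.rpow_natCast] at h1
    have h2 : δ * 2^J ≤ 2 := by
      calc δ * 2^J ≤ δ * (1/δ*2) := mul_le_mul_of_nonneg_left h1 hδ0.le
        _ = 2 := by field_simp
    rw [one_div, inv_pow]
    calc δ = δ * 2^J * (2^J)⁻¹ := by field_simp
      _ ≤ 2 * (2^J)⁻¹ := mul_le_mul_of_nonneg_right h2 (by positivity)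
  -- smallness condition coming from the choice of δ0
  have honehalfε : (1:ℝ) ≤ δ^(-(ε/2)) :=
    Real.one_le_rpow_of_pos_of_le_one_of_nonpos hδ0 hδ1 (by linarith)
  have hcond : 1 + ((J:ℝ)+1)*K1 ≤ δ ^ (-ε) := by
    have hlog2 : (1:ℝ)/2 < Real.log 2 := lt_trans (by norm_num) Real.log_two_gt_d9
    have hlog2pos : (0:ℝ) < Real.log 2 := by linarith
    have hlogδ0 : 0 ≤ Real.log (1/δ) := Real.log_nonneg h1δ
    have hLle : L ≤ 2 * Real.log (1/δ) := by
      rw [hL_def, Real.logb, div_le_iff₀ hlog2pos]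
      nlinarith
    have hloglt : Real.log (1/δ) ≤ (2/ε) * δ ^ (-(ε/2)) := by
      have h1 : Real.log ((1/δ) ^ (ε/2)) ≤ (1/δ)^(ε/2) := by
        have := Real.log_le_sub_one_of_pos (show (0:ℝ) < (1/δ)^(ε/2) by positivity)
        linarith
      rw [Real.log_rpow (by positivity)] at h1
      have h2 : ((1:ℝ)/δ)^(ε/2) = δ^(-(ε/2)) := by
        rw [one_div, Real.inv_rpow hδ0.le, ← Real.rpow_neg hδ0.le]
      rw [h2] at h1
      have h3 := mul_le_mul_of_nonneg_left h1 (le_of_lt (show (0:ℝ) < 2/ε by positivity))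
      calc Real.log (1/δ) = (2/ε) * (ε/2 * Real.log (1/δ)) := by field_simp
        _ ≤ (2/ε) * δ^(-(ε/2)) := h3
    have hK3δ : K3 ≤ δ ^ (-(ε/2)) := by
      have hδε : δ ^ (ε/2) ≤ K3⁻¹ := by
        calc δ^(ε/2) ≤ (K3⁻¹^(2/ε))^(ε/2) :=
              Real.rpow_le_rpow hδ0.le hδK3.le (by positivity)
          _ = K3⁻¹ := by
              rw [← Real.rpow_mul (by positivity : (0:ℝ) ≤ K3⁻¹)]
              have he1 : (2/ε)*(ε/2) = 1 := by field_simp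
              rw [he1, Real.rpow_one]
      have h2 : δ^(-(ε/2)) = (δ^(ε/2))⁻¹ := Real.rpow_neg hδ0.le _
      rw [h2]
      calc K3 = (K3⁻¹)⁻¹ := (inv_inv K3).symm
        _ ≤ (δ^(ε/2))⁻¹ := by
            apply inv_anti₀ (by positivity) hδε
    have hsplitε : δ^(-ε) = δ^(-(ε/2)) * δ^(-(ε/2)) := by
      rw [← Real.rpow_add hδ0]; congr 1; ring
    have hKε : 0 < 4*K1/ε := by positivity
    have hmono : ∀ a b : ℝ, a ≤ b → a * K1 ≤ b * K1 :=
      fun a b hab => mul_le_mul_of_nonneg_right hab hK1pos.le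
    calc 1 + ((J:ℝ)+1)*K1 ≤ 1 + (L+2)*K1 := by
          have := hmono _ _ (show (J:ℝ)+1 ≤ L+2 by linarith)
          linarith
      _ ≤ 1 + (2*Real.log (1/δ)+2)*K1 := by
          have := hmono _ _ (show L+2 ≤ 2*Real.log (1/δ)+2 by linarith)
          linarith
      _ ≤ 1 + (2*((2/ε) * δ^(-(ε/2)))+2)*K1 := by
          have := hmono _ _ (show 2*Real.log (1/δ)+2 ≤ 2*((2/ε) * δ^(-(ε/2)))+2 by linarith)
          linarith
      _ = 1 + 2*K1 + (4*K1/ε)*δ^(-(ε/2)) := by ring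
      _ ≤ 4*K1*δ^(-(ε/2)) + (4*K1/ε)*δ^(-(ε/2)) := by
          have hB : 4*K1 ≤ 4*K1*δ^(-(ε/2)) :=
            le_mul_of_one_le_right (by positivity) honehalfε
          linarith
      _ = K3 * δ^(-(ε/2)) := by rw [hK3_def]; ring
      _ ≤ δ^(-(ε/2)) * δ^(-(ε/2)) := mul_le_mul_of_nonneg_right hK3δ (by positivity)
      _ = δ^(-ε) := hsplitε.symm
  -- cardinality of P
  have hcardP : (P.card : ℝ) ≤ δ ^ (-ε-s) := by
    have h := count_le hδ0 hδ1 hs0 hP1 hP 0 hδ1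
    have hfil : P.filter (fun q => dist q 0 ≤ 1) = P := by
      apply Finset.filter_true_of_mem
      intro q hq
      simpa [mem_closedBall] using hP1 hq
    rw [hfil, Real.one_rpow, mul_one] at h
    exact h
  -- the pair-counting function
  set D := P ×ˢ P with hD_def
  set m4 : ℝ := min s 1 - 2*s - 4*ε with hm4_def
  set Bnd : EuclideanSpace ℝ (Fin n) × EuclideanSpace ℝ (Fin n) →
      Set (sphere (0 : EuclideanSpace ℝ (Fin n)) 1) := fun pq =>
    {e' : sphere (0 : EuclideanSpace ℝ (Fin n)) 1 |
      |(inner ℝ (pq.1 - pq.2) ((e' : EuclideanSpace ℝ (Fin n))) : ℝ)| ≤ 4*δ} with hBnd_def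
  have hBndmeas : ∀ pq, MeasurableSet (Bnd pq) := fun pq => measurableSet_band _ _
  set Q : sphere (0 : EuclideanSpace ℝ (Fin n)) 1 → ℝ≥0∞ := fun e =>
    ∑ pq ∈ D, (Bnd pq).indicator (fun _ => (1:ℝ≥0∞)) e with hQ_def
  have hQmeas : Measurable Q := by
    apply Finset.measurable_sum
    intro pq _
    exact measurable_const.indicator (hBndmeas pq)
  -- the integral bound
  have hlint : ∫⁻ e, Q e ∂(sphereMeasure n) ≤
      ENNReal.ofReal (δ ^ (min s 1 - 2*s - 3*ε)) := by
    have h1 : ∫⁻ e, Q e ∂(sphereMeasure n) = ∑ pq ∈ D, sphereMeasure n (Bnd pq) := by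
      rw [hQ_def, lintegral_finset_sum _
        (fun pq _ => measurable_const.indicator (hBndmeas pq))]
      exact Finset.sum_congr rfl (fun pq _ => lintegral_indicator_one (hBndmeas pq))
    rw [h1]
    have h2 : ∀ pq ∈ D, sphereMeasure n (Bnd pq) ≤
        ENNReal.ofReal (if dist pq.2 pq.1 ≤ (1/2:ℝ)^J then (1:ℝ)
          else K0*δ/dist pq.2 pq.1) := by
      intro pq _
      by_cases hd : dist pq.2 pq.1 ≤ (1/2:ℝ)^J
      · rw [if_pos hd]
        simpa [ENNReal.ofReal_one] using sphereMeasure_le_one hn1 (Bnd pq)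
      · rw [if_neg hd]
        push_neg at hd
        have hdpos : 0 < dist pq.2 pq.1 := lt_trans (by positivity) hd
        have hne : pq.1 - pq.2 ≠ 0 := sub_ne_zero.mpr (dist_pos.mp hdpos).symm
        refine le_trans (sphereMeasure_band_le hn1 _ hne (4*δ) (by positivity)) ?_
        apply ENNReal.ofReal_le_ofReal
        have hnrm : ‖pq.1 - pq.2‖ = dist pq.2 pq.1 := by
          rw [← dist_eq_norm, dist_comm]
        rw [hnrm]
        have heq : sphC n * (4*δ/dist pq.2 pq.1) = ((4*sphC n)*δ)/dist pq.2 pq.1 := by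
          ring
        rw [heq]
        exact (div_le_div_iff_of_pos_right hdpos).mpr
          (mul_le_mul_of_nonneg_right hK04 hδ0.le)
    calc ∑ pq ∈ D, sphereMeasure n (Bnd pq)
        ≤ ∑ pq ∈ D, ENNReal.ofReal (if dist pq.2 pq.1 ≤ (1/2:ℝ)^J then (1:ℝ)
            else K0*δ/dist pq.2 pq.1) := Finset.sum_le_sum h2
      _ = ENNReal.ofReal (∑ pq ∈ D, (if dist pq.2 pq.1 ≤ (1/2:ℝ)^J then (1:ℝ)
            else K0*δ/dist pq.2 pq.1)) := by
          rw [ENNReal.ofReal_sum_of_nonneg]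
          intro pq _
          split_ifs with hd
          · norm_num
          · push_neg at hd
            have hdpos : 0 < dist pq.2 pq.1 := lt_trans (by positivity) hd
            positivity
      _ ≤ ENNReal.ofReal (δ ^ (min s 1 - 2*s - 3*ε)) := by
          apply ENNReal.ofReal_le_ofReal
          rw [hD_def, Finset.sum_product]
          have hrow : ∀ p ∈ P, ∑ q ∈ P, (if dist q p ≤ (1/2:ℝ)^J then (1:ℝ)
              else K0*δ/dist q p) ≤ (1 + ((J:ℝ)+1)*K1) * δ ^ (min s 1 - s - ε) := by
            intro p hp
            rw [hK1_def]
            exact pairsum_le hδ0 hδ1 hs0 hsn hP1 hP hK0 hJ1 hJ2 hp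
          calc ∑ p ∈ P, ∑ q ∈ P, (if dist q p ≤ (1/2:ℝ)^J then (1:ℝ)
                else K0*δ/dist q p)
              ≤ ∑ _p ∈ P, (1 + ((J:ℝ)+1)*K1) * δ ^ (min s 1 - s - ε) :=
                Finset.sum_le_sum hrow
            _ = (P.card : ℝ) * ((1 + ((J:ℝ)+1)*K1) * δ ^ (min s 1 - s - ε)) := by
                rw [Finset.sum_const, nsmul_eq_mul]
            _ ≤ δ ^ (-ε-s) * (δ^(-ε) * δ ^ (min s 1 - s - ε)) := by
                have hf0 : (0:ℝ) ≤ ((J:ℝ)+1)*K1 := by positivity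
                have hf2 : (0:ℝ) ≤ δ ^ (min s 1 - s - ε) := Real.rpow_nonneg hδ0.le _
                have hf1 : 0 ≤ (1 + ((J:ℝ)+1)*K1) * δ ^ (min s 1 - s - ε) := by nlinarith
                apply mul_le_mul hcardP _ hf1 (Real.rpow_nonneg hδ0.le _)
                exact mul_le_mul_of_nonneg_right hcond hf2
            _ = δ ^ (min s 1 - 2*s - 3*ε) := by
                rw [← Real.rpow_add hδ0, ← Real.rpow_add hδ0]
                congr 1
                ring
  -- the exceptional set
  set Eset := {e : sphere (0 : EuclideanSpace ℝ (Fin n)) 1 |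
    ENNReal.ofReal (δ ^ m4) ≤ Q e} with hE_def
  have hEmeas : MeasurableSet Eset := measurableSet_le measurable_const hQmeas
  have hm4pos : (0:ℝ) < δ ^ m4 := Real.rpow_pos_of_pos hδ0 _
  have hne0 : ENNReal.ofReal (δ ^ m4) ≠ 0 := ne_of_gt (ENNReal.ofReal_pos.mpr hm4pos)
  have hnetop : ENNReal.ofReal (δ ^ m4) ≠ ⊤ := ENNReal.ofReal_ne_top
  have hEsmall : sphereMeasure n Eset ≤ ENNReal.ofReal (δ ^ ε) := by
    have hcheb := mul_meas_ge_le_lintegral₀ (μ := sphereMeasure n) hQmeas.aemeasurable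
      (ENNReal.ofReal (δ ^ m4))
    rw [← ENNReal.mul_le_mul_iff_right hne0 hnetop]
    calc ENNReal.ofReal (δ ^ m4) * sphereMeasure n Eset
        ≤ ∫⁻ e, Q e ∂(sphereMeasure n) := hcheb
      _ ≤ ENNReal.ofReal (δ ^ (min s 1 - 2*s - 3*ε)) := hlint
      _ = ENNReal.ofReal (δ ^ m4) * ENNReal.ofReal (δ ^ ε) := by
          rw [← ENNReal.ofReal_mul hm4pos.le, ← Real.rpow_add hδ0]
          congr 1
          rw [hm4_def]
          ring
  refine ⟨Eset, hEmeas, hEsmall, ?_⟩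
  intro e he P' hP'sub hP'card
  have hQe : Q e < ENNReal.ofReal (δ ^ m4) := not_le.mp he
  -- lower bound for any covering family
  rw [coverNum]
  refine le_iInf fun F => le_iInf fun hF => ?_
  have hchoice : ∀ p ∈ P', ∃ x, x ∈ F ∧
      dist ((inner ℝ p ((e : EuclideanSpace ℝ (Fin n))) : ℝ)) x ≤ δ := by
    intro p hp
    have hmem : ((inner ℝ p ((e : EuclideanSpace ℝ (Fin n))) : ℝ)) ∈
        ⋃ x ∈ F, closedBall x δ :=
      hF (Set.mem_image_of_mem _ (Finset.mem_coe.mpr hp))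
    simpa [mem_closedBall] using hmem
  choose! c hcF hcd using hchoice
  set Dsame := (P' ×ˢ P').filter (fun pq => c pq.1 = c pq.2) with hDsame_def
  have hfib1 : P'.card = ∑ x ∈ F, (P'.filter (fun p => c p = x)).card :=
    Finset.card_eq_sum_card_fiberwise hcF
  have hfib2 : Dsame.card = ∑ x ∈ F, ((P'.filter (fun p => c p = x)).card)^2 := by
    rw [Finset.card_eq_sum_card_fiberwise (f := fun pq => c pq.1) (t := F) ?hmaps]
    case hmaps =>
      intro pq hpq
      rw [Finset.mem_coe, Finset.mem_filter, Finset.mem_product] at hpq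
      exact hcF _ hpq.1.1
    apply Finset.sum_congr rfl
    intro x _
    have hprod : Dsame.filter (fun pq => c pq.1 = x) =
        (P'.filter (fun p => c p = x)) ×ˢ (P'.filter (fun p => c p = x)) := by
      ext pq
      simp only [hDsame_def, Finset.mem_filter, Finset.mem_product]
      constructor
      · rintro ⟨⟨⟨h1, h2⟩, h3⟩, h4⟩
        exact ⟨⟨h1, h4⟩, ⟨h2, h3 ▸ h4⟩⟩
      · rintro ⟨⟨h1, h2⟩, h3, h4⟩
        exact ⟨⟨⟨h1, h3⟩, h2.trans h4.symm⟩, h2⟩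
    rw [hprod, Finset.card_product, sq]
  have hCS : (P'.card:ℝ)^2 ≤ (F.card:ℝ) * (Dsame.card:ℝ) := by
    rw [hfib1, hfib2]
    push_cast
    exact sq_sum_le_card_mul_sum_sq
  have hDD : Dsame ⊆ D := by
    intro pq hpq
    rw [hDsame_def, Finset.mem_filter, Finset.mem_product] at hpq
    rw [hD_def, Finset.mem_product]
    exact ⟨hP'sub hpq.1.1, hP'sub hpq.1.2⟩
  have hmemB : ∀ pq ∈ Dsame, e ∈ Bnd pq := by
    intro pq hpq
    rw [hDsame_def, Finset.mem_filter, Finset.mem_product] at hpq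
    obtain ⟨⟨h1, h2⟩, h3⟩ := hpq
    show |(inner ℝ (pq.1 - pq.2) ((e : EuclideanSpace ℝ (Fin n))) : ℝ)| ≤ 4*δ
    have e1 : (inner ℝ (pq.1 - pq.2) ((e : EuclideanSpace ℝ (Fin n))) : ℝ) =
        (inner ℝ pq.1 ((e : EuclideanSpace ℝ (Fin n))) : ℝ) -
        (inner ℝ pq.2 ((e : EuclideanSpace ℝ (Fin n))) : ℝ) := inner_sub_left _ _ _
    rw [e1, ← Real.dist_eq]
    calc dist ((inner ℝ pq.1 ((e : EuclideanSpace ℝ (Fin n))) : ℝ))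
          ((inner ℝ pq.2 ((e : EuclideanSpace ℝ (Fin n))) : ℝ))
        ≤ dist ((inner ℝ pq.1 ((e : EuclideanSpace ℝ (Fin n))) : ℝ)) (c pq.1) +
          dist (c pq.1) ((inner ℝ pq.2 ((e : EuclideanSpace ℝ (Fin n))) : ℝ)) :=
          dist_triangle _ _ _
      _ ≤ δ + δ := by
          apply add_le_add (hcd _ h1)
          rw [h3, dist_comm]
          exact hcd _ h2
      _ ≤ 4*δ := by linarith
  have hDleQ : ((Dsame.card : ℕ) : ℝ≥0∞) ≤ Q e := by
    rw [hQ_def]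
    dsimp only
    calc ((Dsame.card : ℕ) : ℝ≥0∞)
        = ∑ pq ∈ Dsame, (Bnd pq).indicator (fun _ => (1:ℝ≥0∞)) e := by
          rw [Finset.sum_congr rfl (fun pq hpq => Set.indicator_of_mem (hmemB pq hpq) _)]
          simp
      _ ≤ ∑ pq ∈ D, (Bnd pq).indicator (fun _ => (1:ℝ≥0∞)) e :=
          Finset.sum_le_sum_of_subset hDD
  have hDsamereal : ((Dsame.card : ℕ) : ℝ) ≤ δ ^ m4 := by
    have h := lt_of_le_of_lt hDleQ hQe
    rw [← ENNReal.ofReal_natCast] at h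
    exact ((ENNReal.ofReal_lt_ofReal_iff hm4pos).mp h).le
  have hNlb : δ ^ (-(min s 1) + 6*ε) ≤ (F.card:ℝ) := by
    have h1 : (δ^(-s+ε))^2 ≤ ((P'.card:ℝ))^2 :=
      pow_le_pow_left₀ (Real.rpow_nonneg hδ0.le _) hP'card 2
    have h2 : ((P'.card:ℝ))^2 ≤ (F.card:ℝ) * (δ ^ m4) := by
      calc ((P'.card:ℝ))^2 ≤ (F.card:ℝ) * (Dsame.card:ℝ) := hCS
        _ ≤ (F.card:ℝ) * (δ ^ m4) :=
            mul_le_mul_of_nonneg_left hDsamereal (by positivity)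
    have h3 : (δ^(-s+ε))^2 = δ^(-2*s+2*ε) := by
      rw [← Real.rpow_natCast (δ^(-s+ε)) 2, ← Real.rpow_mul hδ0.le]
      congr 1
      push_cast
      ring
    have h4 : δ^(-2*s+2*ε) / δ^m4 ≤ (F.card:ℝ) := by
      rw [div_le_iff₀ hm4pos]
      calc δ^(-2*s+2*ε) = (δ^(-s+ε))^2 := h3.symm
        _ ≤ (F.card:ℝ) * (δ ^ m4) := le_trans h1 h2
    calc δ ^ (-(min s 1) + 6*ε) = δ^(-2*s+2*ε) / δ^m4 := by
          rw [← Real.rpow_sub hδ0]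
          congr 1
          rw [hm4_def]
          ring
      _ ≤ (F.card:ℝ) := h4
  calc ENNReal.ofReal (δ ^ (-(min s 1) + 6 * ε)) ≤ ENNReal.ofReal ((F.card:ℝ)) :=
        ENNReal.ofReal_le_ofReal hNlb
    _ = ((F.card : ℕ) : ℝ≥0∞) := ENNReal.ofReal_natCast _
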